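/- Let $\lambda$ and $\mu$ be partitions of length at most $r+1$ (weakly decreasing sequences of nonnegative integers $\lambda_1 \geq \cdots \geq \lambda_{r+1}$ and $\mu_1 \geq \cdots \geq \mu_{r+1}$). Define the determinant $D = \det\left( \frac{1}{(\lambda_i - \mu_j + j - i)!} \right)_{1\leq i,j \leq r+1}$, where $1/m! := 0$ for $m < 0$. Then $D \neq 0$ if and only if $\lambda_i \geq \mu_i$ for all $i$. -/

import Mathlib

open Finset

/-- Reciprocal factorial: `1/m!` for `m ≥ 0`, and `0` for `m < 0`. -/
noncomputable def rfac (m : ℤ) : ℚ :=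
  if m < 0 then 0 else ((m.toNat).factorial : ℚ)⁻¹

lemma rfac_of_neg {m : ℤ} (h : m < 0) : rfac m = 0 := if_pos h

lemma rfac_zero : rfac (0 : ℤ) = 1 := by simp [rfac]

lemma rfac_sub_one (m : ℤ) : rfac (m - 1) = m * rfac m := by
  rcases lt_trichotomy m 0 with h | h | h
  · rw [rfac_of_neg h, rfac_of_neg (by omega), mul_zero]
  · subst h
    rw [rfac_of_neg (by norm_num)]
    norm_num
  · obtain ⟨t, rfl⟩ : ∃ t : ℕ, m = (t : ℤ) + 1 := ⟨(m - 1).toNat, by omega⟩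
    rw [rfac, rfac, if_neg (by omega), if_neg (by omega)]
    have h1 : ((t : ℤ) + 1 - 1).toNat = t := by omega
    have h2 : ((t : ℤ) + 1).toNat = t + 1 := by omega
    rw [h1, h2, Nat.factorial_succ]
    have ht : ((t + 1 : ℕ) : ℚ) ≠ 0 := by positivity
    have ht2 : ((t.factorial : ℕ) : ℚ) ≠ 0 := by positivity
    push_cast
    field_simp

/-- The determinant vanishes if the sequences cross somewhere. -/
lemma det_rfac_eq_zero {n : ℕ} {a b : Fin n → ℤ} (ha : Antitone a) (hb : Antitone b)
    {k : Fin n} (hk : a k < b k) :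
    Matrix.det (fun i j => rfac (a i - b j)) = 0 := by
  refine (Matrix.det_apply _).trans ?_
  refine Finset.sum_eq_zero fun σ _ => ?_
  have hex : ∃ i, i ≤ k ∧ k ≤ σ i := by
    by_contra h
    push_neg at h
    have hsub : (Finset.Iic k).image σ ⊆ Finset.Iio k := by
      intro x hx
      simp only [Finset.mem_image, Finset.mem_Iic] at hx
      obtain ⟨i, hi, rfl⟩ := hx
      exact Finset.mem_Iio.2 (h i hi)
    have h1 : (Finset.Iic k).card ≤ (Finset.Iio k).card :=
      (Finset.card_image_of_injective _ σ.injective) ▸ Finset.card_le_card hsub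
    have h2 : (Finset.Iio k).card < (Finset.Iic k).card := by
      refine Finset.card_lt_card ?_
      rw [Finset.ssubset_iff_of_subset (fun x hx => Finset.mem_Iic.2
        (le_of_lt (Finset.mem_Iio.1 hx)))]
      exact ⟨k, Finset.mem_Iic.2 le_rfl, by simp⟩
    omega
  obtain ⟨i, hik, hki⟩ := hex
  have hz : rfac (a (σ i) - b i) = 0 := by
    refine rfac_of_neg ?_
    have h1 := ha hki
    have h2 := hb hik
    omega
  rw [Finset.prod_eq_zero (Finset.mem_univ i) hz, smul_zero]

lemma sum_det_updateRow_colmul {n : ℕ} (M : Matrix (Fin n) (Fin n) ℚ) (b : Fin n → ℚ) :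
    ∑ k, Matrix.det (M.updateRow k (fun j => b j * M k j)) = (∑ j, b j) * M.det := by
  have hterm : ∀ (σ : Equiv.Perm (Fin n)) (k : Fin n),
      (∏ i, (M.updateRow k fun j => b j * M k j) (σ i) i)
        = b (σ.symm k) * ∏ i, M (σ i) i := by
    intro σ k
    have h1 : ∀ i, (M.updateRow k fun j => b j * M k j) (σ i) i
        = (if i = σ.symm k then b i else 1) * M (σ i) i := by
      intro i
      rw [Matrix.updateRow_apply]
      by_cases h : σ i = k
      · have hi : i = σ.symm k := by rw [← h, Equiv.symm_apply_apply]
        rw [if_pos h, if_pos hi, ← h]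
      · have hi : i ≠ σ.symm k := fun hh => h (by rw [hh, Equiv.apply_symm_apply])
        rw [if_neg h, if_neg hi, one_mul]
    simp only [h1]
    rw [Finset.prod_mul_distrib, Finset.prod_ite_eq' Finset.univ (σ.symm k) b,
      if_pos (Finset.mem_univ _)]
  have h2 : ∀ k, Matrix.det (M.updateRow k fun j => b j * M k j)
      = ∑ σ : Equiv.Perm (Fin n), (Equiv.Perm.sign σ : ℤ) * (b (σ.symm k) * ∏ i, M (σ i) i) := by
    intro k
    rw [Matrix.det_apply']
    exact Finset.sum_congr rfl fun σ _ => by rw [hterm]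
  simp only [h2]
  rw [Finset.sum_comm, Matrix.det_apply', Finset.mul_sum]
  refine Finset.sum_congr rfl fun σ _ => ?_
  have hs : ∑ k, b (σ.symm k) = ∑ j, b j := Equiv.sum_comp σ.symm b
  rw [← Finset.mul_sum, ← Finset.sum_mul, hs]
  ring

lemma key_identity {n : ℕ} (a b : Fin n → ℤ) :
    ∑ k, Matrix.det (fun i j => rfac (Function.update a k (a k - 1) i - b j))
      = ((∑ i, (a i - b i) : ℤ) : ℚ) * Matrix.det (fun i j => rfac (a i - b j)) := by
  set M : Matrix (Fin n) (Fin n) ℚ := fun i j => rfac (a i - b j) with hM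
  have hupd : ∀ k : Fin n, (fun i j => rfac (Function.update a k (a k - 1) i - b j))
      = M.updateRow k ((a k : ℚ) • M k + (-1 : ℚ) • fun j => (b j : ℚ) * M k j) := by
    intro k
    ext i j
    rw [Matrix.updateRow_apply]
    by_cases h : i = k
    · subst h
      rw [if_pos rfl, Function.update_self]
      have : a i - 1 - b j = (a i - b j) - 1 := by ring
      rw [this, rfac_sub_one]
      simp only [Pi.add_apply, Pi.smul_apply, smul_eq_mul, hM]
      push_cast
      ring
    · rw [if_neg h, Function.update_of_ne h]
  have hdet : ∀ k : Fin n, Matrix.det (fun i j => rfac (Function.update a k (a k - 1) i - b j))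
      = (a k : ℚ) * M.det - Matrix.det (M.updateRow k (fun j => (b j : ℚ) * M k j)) := by
    intro k
    rw [hupd k]
    rw [Matrix.det_updateRow_add, Matrix.det_updateRow_smul, Matrix.det_updateRow_smul,
      Matrix.updateRow_eq_self]
    ring
  simp only [hdet]
  rw [Finset.sum_sub_distrib, ← Finset.sum_mul, sum_det_updateRow_colmul]
  push_cast
  rw [Finset.sum_sub_distrib]
  ring

lemma det_rfac_pos : ∀ (N : ℕ) {n : ℕ} (a b : Fin n → ℤ), StrictAnti a → StrictAnti b →
    b ≤ a → (∑ i, (a i - b i)) = (N : ℤ) →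
    0 < Matrix.det (fun i j => rfac (a i - b j)) := by
  intro N
  induction N with
  | zero =>
    intro n a b ha hb hba hsum
    have hab : ∀ i, a i = b i := by
      have h := (Finset.sum_eq_zero_iff_of_nonneg
        (fun i _ => sub_nonneg.2 (hba i))).1 (by simpa using hsum)
      intro i
      have := h i (Finset.mem_univ i)
      omega
    have htri : Matrix.BlockTriangular (fun i j => rfac (a i - b j)) id := by
      intro i j hij
      exact rfac_of_neg (by
        have h1 : b i < b j := hb hij
        have h2 := hab i
        omega)
    rw [Matrix.det_of_upperTriangular htri]
    have : ∀ i : Fin n, rfac (a i - b i) = 1 := fun i => by rw [hab i, sub_self, rfac_zero]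
    rw [Finset.prod_congr rfl fun i _ => this i, Finset.prod_const_one]
    norm_num
  | succ N ih =>
    intro n a b ha hb hba hsum
    have hstep : ∀ k : Fin n, (∀ i, k < i → a i ≠ a k - 1) → b k ≤ a k - 1 →
        0 < Matrix.det (fun i j => rfac (Function.update a k (a k - 1) i - b j)) := by
      intro k hrep hbk
      have ha' : StrictAnti (Function.update a k (a k - 1)) := by
        intro i j hij
        rcases eq_or_ne i k with rfl | hik
        · rw [Function.update_self, Function.update_of_ne (ne_of_gt hij)]
          have h1 : a j < a i := ha hij
          have h2 := hrep j hij
          omega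
        · rw [Function.update_of_ne hik]
          rcases eq_or_ne j k with rfl | hjk
          · rw [Function.update_self]
            have := ha hij
            omega
          · rw [Function.update_of_ne hjk]
            exact ha hij
      refine ih _ b ha' hb ?_ ?_
      · intro i
        rcases eq_or_ne i k with rfl | hik
        · rw [Function.update_self]; exact hbk
        · rw [Function.update_of_ne hik]; exact hba i
      · have hupdsum : ∑ i, (Function.update a k (a k - 1) i - b i)
            = ∑ i, ((a i - b i) + (if i = k then (-1 : ℤ) else 0)) := by
          refine Finset.sum_congr rfl fun i _ => ?_
          rcases eq_or_ne i k with rfl | h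
          · simp
            ring
          · simp [Function.update_of_ne h, h]
        rw [hupdsum, Finset.sum_add_distrib, Finset.sum_ite_eq' Finset.univ k,
          if_pos (Finset.mem_univ k), hsum]
        push_cast
        ring
    have hterm : ∀ k : Fin n,
        0 ≤ Matrix.det (fun i j => rfac (Function.update a k (a k - 1) i - b j)) := by
      intro k
      by_cases hrep : ∃ i, k < i ∧ a i = a k - 1
      · obtain ⟨i, hki, hai⟩ := hrep
        refine le_of_eq (Matrix.det_zero_of_row_eq (show i ≠ k from ne_of_gt hki) ?_).symm
        funext j
        simp only [Function.update_of_ne (ne_of_gt hki), Function.update_self, hai]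
      · push_neg at hrep
        by_cases hbk : b k ≤ a k - 1
        · exact le_of_lt (hstep k hrep hbk)
        · have ha' : StrictAnti (Function.update a k (a k - 1)) := by
            intro i j hij
            rcases eq_or_ne i k with rfl | hik
            · rw [Function.update_self, Function.update_of_ne (ne_of_gt hij)]
              have h1 : a j < a i := ha hij
              have h2 := hrep j hij
              omega
            · rw [Function.update_of_ne hik]
              rcases eq_or_ne j k with rfl | hjk
              · rw [Function.update_self]
                have := ha hij
                omega
              · rw [Function.update_of_ne hjk]
                exact ha hij
          refine le_of_eq (det_rfac_eq_zero ha'.antitone hb.antitone (k := k) ?_).symm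
          rw [Function.update_self]
          omega
    have hne : ∃ i, b i < a i := by
      by_contra h
      push_neg at h
      have hall : ∀ i, a i = b i := fun i => le_antisymm (h i) (hba i)
      rw [Finset.sum_congr rfl fun i _ => by rw [hall i]] at hsum
      simp only [sub_self, Finset.sum_const_zero] at hsum
      omega
    obtain ⟨i0, hi0⟩ := hne
    have hsne : (Finset.univ.filter (fun i => b i < a i)).Nonempty :=
      ⟨i0, by simp [hi0]⟩
    set k := (Finset.univ.filter (fun i : Fin n => b i < a i)).max' hsne with hk
    have hks : b k < a k := by
      have := Finset.max'_mem _ hsne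
      rw [← hk] at this
      simpa using this
    have hmax : ∀ i, k < i → a i = b i := by
      intro i hi
      by_contra hcon
      have h1 : b i < a i := lt_of_le_of_ne (hba i) (Ne.symm hcon)
      have h2 : i ≤ k := Finset.le_max' _ i (by simp [h1])
      exact absurd hi (not_lt.2 h2)
    have hrepk : ∀ i, k < i → a i ≠ a k - 1 := by
      intro i hi hcon
      have h1 := hmax i hi
      have h2 : b i < b k := hb hi
      omega
    have hposk := hstep k hrepk (by omega)
    have hsumpos : 0 < ∑ j, Matrix.det
        (fun i j' => rfac (Function.update a j (a j - 1) i - b j')) :=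
      Finset.sum_pos' (fun j _ => hterm j) ⟨k, Finset.mem_univ k, hposk⟩
    have hkey := key_identity a b
    rw [hsum] at hkey
    rw [hkey] at hsumpos
    have hNpos : (0 : ℚ) < ((N + 1 : ℕ) : ℤ) := by positivity
    nlinarith [hsumpos, hNpos]

theorem aitken_det_ne_zero_iff (r : ℕ) (lam mu : Fin (r + 1) → ℕ)
    (hlam : Antitone lam) (hmu : Antitone mu) :
    Matrix.det (fun i j : Fin (r + 1) =>
        rfac ((lam i : ℤ) - (mu j : ℤ) + (j.val : ℤ) - (i.val : ℤ))) ≠ 0 ↔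
      ∀ i, mu i ≤ lam i := by
  set a : Fin (r + 1) → ℤ := fun i => (lam i : ℤ) - (i : ℤ) with hadef
  set b : Fin (r + 1) → ℤ := fun j => (mu j : ℤ) - (j : ℤ) with hbdef
  have hmeq : (fun i j : Fin (r + 1) =>
      rfac ((lam i : ℤ) - (mu j : ℤ) + (j.val : ℤ) - (i.val : ℤ)))
      = fun i j => rfac (a i - b j) := by
    funext i j
    congr 1
    simp only [hadef, hbdef]
    ring
  rw [hmeq]
  have ha : StrictAnti a := by
    intro i j hij
    have h1 : lam j ≤ lam i := hlam (le_of_lt hij)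
    have h2 : (i : ℤ) < (j : ℤ) := by exact_mod_cast hij
    simp only [hadef]
    omega
  have hb : StrictAnti b := by
    intro i j hij
    have h1 : mu j ≤ mu i := hmu (le_of_lt hij)
    have h2 : (i : ℤ) < (j : ℤ) := by exact_mod_cast hij
    simp only [hbdef]
    omega
  constructor
  · intro hd i
    by_contra hcon
    push_neg at hcon
    refine hd (det_rfac_eq_zero ha.antitone hb.antitone (k := i) ?_)
    simp only [hadef, hbdef]
    omega
  · intro h
    have hba : b ≤ a := by
      intro i
      have := h i
      simp only [hadef, hbdef]
      omega
    refine ne_of_gt (det_rfac_pos (∑ i, (a i - b i)).toNat a b ha hb hba ?_)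
    rw [Int.toNat_of_nonneg (Finset.sum_nonneg fun i _ => sub_nonneg.2 (hba i))]
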